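/- Fix k ∈ ℤ and a measurable set A ⊆ ℝⁿ. Then ∫_{[0,1]ⁿ} |{v ∈ ℤⁿ : 2^{-(k-1)}([0,1]ⁿ + (v-w)/2) ⊆ A}| dw = 2^{nk} · Vₙ(A ⊖ [0, 2^{-(k-1)}]ⁿ). -/

import Mathlib

open MeasureTheory

/-- The (real-offset) dyadic hypercube `2^{-k}([0,1]ⁿ + u)` for `u ∈ ℝⁿ`. -/
def dyadicCubeR (n : ℕ) (k : ℤ) (u : Fin n → ℝ) : Set (Fin n → ℝ) :=
  {x | ∀ i, (2 : ℝ) ^ (-k) * u i ≤ x i ∧ x i ≤ (2 : ℝ) ^ (-k) * (u i + 1)}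

/-- The Minkowski erosion `A ⊖ B = {x : B + x ⊆ A}`. -/
def erosion {n : ℕ} (A B : Set (Fin n → ℝ)) : Set (Fin n → ℝ) :=
  {x | ∀ b ∈ B, b + x ∈ A}

section Aux

open Set Metric Filter

lemma aux_hyperplane_null (n : ℕ) (i : Fin n) (c : ℝ) :
    volume {x : Fin n → ℝ | x i = c} = 0 := by
  have h : {x : Fin n → ℝ | x i = c} = Set.pi univ (fun j => if j = i then {c} else univ) := by
    ext x
    simp only [mem_setOf_eq, mem_univ_pi]
    constructor
    · intro h j; by_cases hj : j = i <;> simp [hj, h]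
    · intro h; have := h i; simpa using this
  rw [h, volume_pi_pi]
  refine Finset.prod_eq_zero (Finset.mem_univ i) ?_
  simp

lemma aux_tiling (n : ℕ) (G : Set (Fin n → ℝ)) (hG : MeasurableSet G) :
    ∑' v : Fin n → ℤ, volume (G ∩ {x | ∀ i, x i ∈ Icc (v i : ℝ) ((v i : ℝ) + 1)}) = volume G := by
  set Q : (Fin n → ℤ) → Set (Fin n → ℝ) := fun v => {x | ∀ i, x i ∈ Ico (v i : ℝ) ((v i : ℝ) + 1)}
    with hQ
  have hQmeas : ∀ v, MeasurableSet (Q v) := by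
    intro v
    have : Q v = Set.pi univ (fun i => Ico (v i : ℝ) ((v i : ℝ) + 1)) := by
      ext x; simp [hQ]
    rw [this]
    exact MeasurableSet.univ_pi fun i => measurableSet_Ico
  have hstep1 : ∀ v : Fin n → ℤ,
      volume (G ∩ {x | ∀ i, x i ∈ Icc (v i : ℝ) ((v i : ℝ) + 1)}) = volume (G ∩ Q v) := by
    intro v
    refine le_antisymm ?_
      (measure_mono (inter_subset_inter_right _ (fun x hx i => Ico_subset_Icc_self (hx i))))
    have hsub : G ∩ {x | ∀ i, x i ∈ Icc (v i : ℝ) ((v i : ℝ) + 1)} ⊆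
        (G ∩ Q v) ∪ (⋃ i, {x : Fin n → ℝ | x i = (v i : ℝ) + 1}) := by
      rintro x ⟨hxG, hxI⟩
      by_cases h : x ∈ Q v
      · exact Or.inl ⟨hxG, h⟩
      · simp only [hQ, mem_setOf_eq, not_forall] at h
        obtain ⟨i, hi⟩ := h
        rw [mem_Ico, not_and_or, not_lt] at hi
        rcases hi with hi | hi
        · exact absurd (hxI i).1 (by simpa using hi)
        · exact Or.inr (mem_iUnion.2 ⟨i, le_antisymm (hxI i).2 hi⟩)
    calc volume (G ∩ {x | ∀ i, x i ∈ Icc (v i : ℝ) ((v i : ℝ) + 1)})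
        ≤ volume ((G ∩ Q v) ∪ (⋃ i, {x : Fin n → ℝ | x i = (v i : ℝ) + 1})) := measure_mono hsub
      _ ≤ volume (G ∩ Q v) + volume (⋃ i, {x : Fin n → ℝ | x i = (v i : ℝ) + 1}) :=
          measure_union_le _ _
      _ = volume (G ∩ Q v) := by
          rw [measure_iUnion_null fun i => aux_hyperplane_null n i _, add_zero]
  simp only [hstep1]
  have hdisj : Pairwise (Function.onFun Disjoint fun v => G ∩ Q v) := by
    intro v v' hvv'
    refine Set.disjoint_left.2 ?_
    rintro x ⟨-, hx⟩ ⟨-, hx'⟩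
    apply hvv'
    funext i
    have h1 := hx i; have h2 := hx' i
    have : (⌊x i⌋ : ℤ) = v i := Int.floor_eq_iff.2 ⟨h1.1, by exact_mod_cast h1.2⟩
    have h' : (⌊x i⌋ : ℤ) = v' i := Int.floor_eq_iff.2 ⟨h2.1, by exact_mod_cast h2.2⟩
    rw [← this, h']
  rw [← measure_iUnion hdisj fun v => hG.inter (hQmeas v)]
  congr 1
  rw [← inter_iUnion]
  refine (inter_eq_left.2 ?_)
  intro x _
  exact mem_iUnion.2 ⟨fun i => ⌊x i⌋, fun i => ⟨Int.floor_le _, Int.lt_floor_add_one _⟩⟩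

lemma aux_erosion_open_closed {n : ℕ} (A B : Set (Fin n → ℝ)) (hB : IsOpen B) :
    IsClosed (erosion A B) := by
  rw [← isOpen_compl_iff]
  have h : (erosion A B)ᶜ = ⋃ c ∈ Aᶜ, ((fun x => c - x) ⁻¹' B) := by
    ext x
    simp only [erosion, mem_compl_iff, mem_setOf_eq, not_forall, mem_iUnion, mem_preimage]
    constructor
    · rintro ⟨b, hb, hba⟩; exact ⟨b + x, hba, by simpa using hb⟩
    · rintro ⟨c, hc, hcx⟩; exact ⟨c - x, hcx, by simpa using hc⟩
  rw [h]
  exact isOpen_biUnion fun c _ => hB.preimage (continuous_const.sub continuous_id)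

lemma aux_erosion_diff_null {n : ℕ} (A : Set (Fin n → ℝ)) {L : ℝ} (hL : 0 < L) :
    volume (erosion A {x | ∀ i, x i ∈ Ioo (0:ℝ) L}
      \ erosion A {x | ∀ i, x i ∈ Icc (0:ℝ) L}) = 0 := by
  set E' := erosion A {x | ∀ i, x i ∈ Ioo (0:ℝ) L} with hE'
  set E := erosion A {x | ∀ i, x i ∈ Icc (0:ℝ) L} with hE
  set D := E' \ E with hD
  set q : ENNReal := 1 - ((2:ENNReal)⁻¹)^n with hq
  have ratio_le : ∀ y ∈ D, ∀ r : ℝ, 0 < r → r ≤ L →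
      volume (D ∩ closedBall y r) / volume (closedBall y r) ≤ q := by
    intro y hy r hr hrL
    obtain ⟨hyE', hyE⟩ := hy
    have hex : ∃ b : Fin n → ℝ, (∀ i, b i ∈ Icc (0:ℝ) L) ∧ b + y ∉ A := by
      by_contra h
      push_neg at h
      exact hyE fun b hb => h b hb
    obtain ⟨b, hb, hbA⟩ := hex
    set m : Fin n → ℝ := fun i => max (y i + b i - L) (y i - r) with hm
    set J := Set.pi univ fun i => Ioo (m i) (m i + r) with hJ
    have hmy : ∀ i, m i ≤ y i := fun i =>
      max_le (by linarith [(hb i).2]) (by linarith)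
    have hmy' : ∀ i, m i + r ≤ y i + b i := by
      intro i
      have h1 := (hb i).1
      have h2 := (hb i).2
      have : m i ≤ y i + b i - r := max_le (by linarith) (by linarith)
      linarith
    have hcb : closedBall y r = Set.pi univ fun i => Icc (y i - r) (y i + r) := by
      rw [closedBall_pi y hr.le]
      simp only [Real.closedBall_eq_Icc]
    have hJcb : J ⊆ closedBall y r := by
      rw [hcb]
      intro x hx
      intro i _
      have h1 := (hx i (mem_univ i)).1
      have h2 := (hx i (mem_univ i)).2
      have h3 := hmy i
      have h4 : m i ≥ y i - r := le_max_right _ _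
      exact ⟨by linarith, by linarith⟩
    have hJD : ∀ x ∈ J, x ∉ E' := by
      intro x hx hxE'
      apply hbA
      have hb' : ∀ i, (b i + y i - x i) ∈ Ioo (0:ℝ) L := by
        intro i
        have h1 := (hx i (mem_univ i)).1
        have h2 := (hx i (mem_univ i)).2
        have h3 := hmy' i
        have h4 : y i + b i - L ≤ m i := le_max_left _ _
        constructor <;> [linarith; linarith]
      have := hxE' (fun i => b i + y i - x i) hb'
      have heq : (fun i => b i + y i - x i) + x = b + y := by
        funext i
        show b i + y i - x i + x i = b i + y i
        ring
      rwa [heq] at this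
    have hJmeas : MeasurableSet J :=
      MeasurableSet.univ_pi fun i => measurableSet_Ioo
    have hJvol : volume J = ENNReal.ofReal r ^ n := by
      rw [hJ, volume_pi_pi]
      simp [Real.volume_Ioo]
    have hcbvol : volume (closedBall y r) = ENNReal.ofReal (2*r) ^ n := by
      rw [hcb, volume_pi_pi]
      have : ∀ i : Fin n, volume (Icc (y i - r) (y i + r)) = ENNReal.ofReal (2*r) := by
        intro i; rw [Real.volume_Icc]; congr 1; ring
      simp [this]
    set a := ENNReal.ofReal (2*r) with ha
    have ha0 : a ≠ 0 := by
      simp [ha, ENNReal.ofReal_eq_zero]; linarith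
    have haT : a ≠ ⊤ := ENNReal.ofReal_ne_top
    have hra : ENNReal.ofReal r = a * 2⁻¹ := by
      rw [ha, show (2:ℝ)*r = 2*r from rfl, ENNReal.ofReal_mul (by norm_num : (0:ℝ) ≤ 2)]
      rw [ENNReal.ofReal_ofNat]
      rw [mul_comm (2:ENNReal) _, mul_assoc, ENNReal.mul_inv_cancel (by norm_num) (by norm_num),
        mul_one]
    have hDa : volume (D ∩ closedBall y r) ≤ a ^ n - (a * 2⁻¹) ^ n := by
      have hsub : D ∩ closedBall y r ⊆ closedBall y r \ J := by
        rintro x ⟨hxD, hxcb⟩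
        exact ⟨hxcb, fun hxJ => hJD x hxJ hxD.1⟩
      calc volume (D ∩ closedBall y r) ≤ volume (closedBall y r \ J) := measure_mono hsub
        _ = volume (closedBall y r) - volume J :=
            measure_diff hJcb hJmeas.nullMeasurableSet
              (by rw [hJvol]; exact ENNReal.pow_ne_top ENNReal.ofReal_ne_top)
        _ = a ^ n - (a * 2⁻¹) ^ n := by rw [hcbvol, hJvol, hra]
    have hfin : a ^ n ≠ ⊤ := ENNReal.pow_ne_top haT
    have h0 : a ^ n ≠ 0 := pow_ne_zero n ha0
    calc volume (D ∩ closedBall y r) / volume (closedBall y r)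
        ≤ (a ^ n - (a * 2⁻¹) ^ n) / a ^ n := by
          rw [hcbvol]; exact ENNReal.div_le_div_right hDa _
      _ = (a ^ n - a ^ n * (2⁻¹)^n) / a ^ n := by rw [mul_pow]
      _ = (a ^ n * (1 - (2⁻¹)^n)) / a ^ n := by
          congr 1
          rw [ENNReal.mul_sub (fun _ _ => hfin), mul_one]
      _ = q := by
          rw [hq, mul_comm, mul_div_assoc, ENNReal.div_self h0 hfin, mul_one]
  have hq1 : q < 1 := by
    refine ENNReal.sub_lt_self ENNReal.one_ne_top one_ne_zero ?_
    exact pow_ne_zero n (by simp)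
  have hnot : ∀ y ∈ D, ¬ Tendsto (fun r => volume (D ∩ closedBall y r) / volume (closedBall y r))
      (nhdsWithin 0 (Ioi 0)) (nhds 1) := by
    intro y hy h
    have h1 : ∀ᶠ r in nhdsWithin (0:ℝ) (Ioi 0),
        q < volume (D ∩ closedBall y r) / volume (closedBall y r) :=
      h (Ioi_mem_nhds hq1)
    have h2 : Ioo (0:ℝ) L ∈ nhdsWithin (0:ℝ) (Ioi 0) :=
      Ioo_mem_nhdsGT_of_mem ⟨le_refl _, hL⟩
    obtain ⟨r, hr1, hr2⟩ := (h1.and h2).exists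
    exact absurd (ratio_le y hy r hr2.1 hr2.2.le) (not_le.2 hr1)
  have hbes := Besicovitch.ae_tendsto_measure_inter_div (volume : Measure (Fin n → ℝ)) D
  rw [ae_iff] at hbes
  have hsub : D ⊆ {y | ¬ Tendsto
      (fun r => volume (D ∩ closedBall y r) / volume (closedBall y r))
      (nhdsWithin 0 (Ioi 0)) (nhds 1)} := fun y hy => hnot y hy
  refine le_antisymm ?_ (zero_le)
  calc volume D = volume ({y | ¬ Tendsto
        (fun r => volume (D ∩ closedBall y r) / volume (closedBall y r))
        (nhdsWithin 0 (Ioi 0)) (nhds 1)} ∩ D) := by rw [inter_eq_right.2 hsub]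
    _ ≤ (volume.restrict D) {y | ¬ Tendsto
        (fun r => volume (D ∩ closedBall y r) / volume (closedBall y r))
        (nhdsWithin 0 (Ioi 0)) (nhds 1)} := Measure.le_restrict_apply _ _
    _ = 0 := hbes

lemma aux_ofReal_two_zpow (m : ℤ) : ENNReal.ofReal ((2:ℝ)^m) = (2:ENNReal)^m := by
  induction m using Int.rec with
  | ofNat a =>
      rw [Int.ofNat_eq_coe, zpow_natCast, zpow_natCast,
        ENNReal.ofReal_pow (by norm_num : (0:ℝ) ≤ 2)]
      norm_num
  | negSucc a =>
      rw [zpow_negSucc, zpow_negSucc,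
        ENNReal.ofReal_inv_of_pos (pow_pos (by norm_num) _),
        ENNReal.ofReal_pow (by norm_num : (0:ℝ) ≤ 2)]
      norm_num

end Aux

open Set Metric Filter

/-- `∫_{[0,1]ⁿ} |{v ∈ ℤⁿ : 2^{-(k-1)}([0,1]ⁿ + (v-w)/2) ⊆ A}| dw
      = 2^{nk} Vₙ(A ⊖ [0, 2^{-(k-1)}]ⁿ)`,
the cardinality being written as a `tsum` of indicators. -/
theorem stmt_5 (n : ℕ) (k : ℤ) (A : Set (Fin n → ℝ)) (hA : MeasurableSet A) :
    ∫⁻ w in {w : Fin n → ℝ | ∀ i, w i ∈ Set.Icc (0 : ℝ) 1},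
        ∑' v : Fin n → ℤ,
          Set.indicator {w' : Fin n → ℝ |
              dyadicCubeR n (k - 1) (fun i => ((v i : ℝ) - w' i) / 2) ⊆ A}
            (fun _ => (1 : ENNReal)) w ∂volume
      = (2 : ENNReal) ^ ((n : ℤ) * k) *
          volume (erosion A {x : Fin n → ℝ | ∀ i, x i ∈ Set.Icc (0 : ℝ) ((2 : ℝ) ^ (-(k - 1)))}) := by
  set L : ℝ := (2:ℝ) ^ (-(k-1)) with hLdef
  have hL : 0 < L := zpow_pos (by norm_num) _
  have h2k : (0:ℝ) < (2:ℝ)^(-k) := zpow_pos (by norm_num) _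
  set E := erosion A {x : Fin n → ℝ | ∀ i, x i ∈ Icc (0:ℝ) L} with hE
  have hkey : L = 2 * (2:ℝ)^(-k) := by
    rw [hLdef, show -(k-1) = 1 + -k by ring, zpow_add₀ (two_ne_zero), zpow_one]
  -- arithmetic identities
  have e1 : ∀ u : ℝ, (2:ℝ)^(-(k-1)) * (u/2) = (2:ℝ)^(-k) * u := by
    intro u
    rw [← hLdef, hkey]; ring
  have e2 : ∀ u : ℝ, (2:ℝ)^(-(k-1)) * (u/2 + 1) = (2:ℝ)^(-k) * u + L := by
    intro u
    rw [← hLdef, hkey]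
    ring
  -- the affine maps
  set Φ : (Fin n → ℤ) → (Fin n → ℝ) → (Fin n → ℝ) :=
    fun v w i => (2:ℝ)^(-k) * ((v i : ℝ) - w i) with hΦ
  have hΦmeas : ∀ v, Measurable (Φ v) := by
    intro v
    exact measurable_pi_lambda _ fun i =>
      ((measurable_pi_apply i).const_sub _).const_mul _
  -- Step A : rewrite the indicator sets
  have hset : ∀ v : Fin n → ℤ,
      {w' : Fin n → ℝ | dyadicCubeR n (k - 1) (fun i => ((v i : ℝ) - w' i) / 2) ⊆ A}
        = Φ v ⁻¹' E := by
    intro v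
    ext w
    simp only [mem_setOf_eq, mem_preimage, hE, erosion, hΦ]
    constructor
    · intro h b hb
      apply h
      intro i
      have h1 := (hb i).1
      have h2 := (hb i).2
      have hadd : (b + fun i => (2:ℝ)^(-k) * ((v i : ℝ) - w i)) i
          = b i + (2:ℝ)^(-k) * ((v i : ℝ) - w i) := rfl
      rw [hadd, e1, e2]
      constructor <;> linarith
    · intro h x hx
      have hb : ∀ i, x i - (2:ℝ)^(-k) * ((v i : ℝ) - w i) ∈ Icc (0:ℝ) L := by
        intro i
        have h1 := (hx i).1
        have h2 := (hx i).2
        rw [e1] at h1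
        rw [e2] at h2
        rw [mem_Icc]
        constructor <;> linarith
      have := h (fun j => x j - (2:ℝ)^(-k) * ((v j : ℝ) - w j)) (fun i => hb i)
      have heq : (fun j => x j - (2:ℝ)^(-k) * ((v j : ℝ) - w j))
          + (fun i => (2:ℝ)^(-k) * ((v i : ℝ) - w i)) = x := by
        funext j
        show x j - (2:ℝ)^(-k) * ((v j : ℝ) - w j) + (2:ℝ)^(-k) * ((v j : ℝ) - w j) = x j
        ring
      rwa [heq] at this
  -- null-measurability of E
  have hIooIcc : ∀ b : Fin n → ℝ, (∀ i, b i ∈ Ioo (0:ℝ) L) → ∀ i, b i ∈ Icc (0:ℝ) L :=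
    fun b hb i => Ioo_subset_Icc_self (hb i)
  have hEsub : E ⊆ erosion A {x : Fin n → ℝ | ∀ i, x i ∈ Ioo (0:ℝ) L} :=
    fun x hx b hb => hx b (hIooIcc b hb)
  have hopen : IsOpen {x : Fin n → ℝ | ∀ i, x i ∈ Ioo (0:ℝ) L} := by
    have : {x : Fin n → ℝ | ∀ i, x i ∈ Ioo (0:ℝ) L}
        = ⋂ i, (fun x : Fin n → ℝ => x i) ⁻¹' (Ioo (0:ℝ) L) := by
      ext x; simp
    rw [this]
    exact isOpen_iInter_of_finite fun i => isOpen_Ioo.preimage (continuous_apply i)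
  have hEnull : NullMeasurableSet E volume := by
    have h1 : E = erosion A {x : Fin n → ℝ | ∀ i, x i ∈ Ioo (0:ℝ) L}
        \ (erosion A {x : Fin n → ℝ | ∀ i, x i ∈ Ioo (0:ℝ) L} \ E) :=
      (diff_diff_cancel_left hEsub).symm
    rw [h1]
    exact ((aux_erosion_open_closed A _ hopen).measurableSet.nullMeasurableSet).diff
      (NullMeasurableSet.of_null (aux_erosion_diff_null A hL))
  -- measurable version of E
  set E₀ := toMeasurable volume E with hE₀def
  have hE₀meas : MeasurableSet E₀ := measurableSet_toMeasurable _ _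
  have hae : E₀ =ᵐ[volume] E := hEnull.toMeasurable_ae_eq
  obtain ⟨hd1, hd2⟩ := (MeasureTheory.ae_eq_set.mp hae)
  -- preimages of null sets under Φ v are null
  have hr0 : (-(2:ℝ)^(-k)) ≠ 0 := neg_ne_zero.2 (ne_of_gt h2k)
  have hcompeq : ∀ (v : Fin n → ℤ) (S : Set (Fin n → ℝ)),
      (fun w => (fun i => (v i : ℝ)) + w) ⁻¹' (Φ v ⁻¹' S)
        = (fun x : Fin n → ℝ => (-(2:ℝ)^(-k)) • x) ⁻¹' S := by
    intro v S
    ext w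
    simp only [mem_preimage]
    have : Φ v ((fun i => (v i : ℝ)) + w) = (-(2:ℝ)^(-k)) • w := by
      funext i
      show (2:ℝ)^(-k) * ((v i : ℝ) - ((v i : ℝ) + w i)) = (-(2:ℝ)^(-k)) * w i
      ring
    rw [this]
  have hnullpre : ∀ N : Set (Fin n → ℝ), volume N = 0 →
      ∀ v : Fin n → ℤ, volume (Φ v ⁻¹' N) = 0 := by
    intro N hN v
    have h1 := (measure_preimage_add volume (fun i => (v i : ℝ)) (Φ v ⁻¹' N)).symm
    rw [h1, hcompeq v N, Measure.addHaar_preimage_smul volume hr0, hN, mul_zero]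
  -- replace E by E₀ a.e.
  have hNbad : volume (⋃ v : Fin n → ℤ, (Φ v ⁻¹' (E₀ \ E) ∪ Φ v ⁻¹' (E \ E₀))) = 0 :=
    measure_iUnion_null fun v =>
      measure_union_null (hnullpre _ hd1 v) (hnullpre _ hd2 v)
  have haeint : ∀ᵐ w ∂(volume : Measure (Fin n → ℝ)),
      (∑' v : Fin n → ℤ, Set.indicator (Φ v ⁻¹' E) (fun _ => (1:ENNReal)) w)
        = ∑' v : Fin n → ℤ, Set.indicator (Φ v ⁻¹' E₀) (fun _ => (1:ENNReal)) w := by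
    refine (measure_eq_zero_iff_ae_notMem.mp hNbad).mono fun w hw => tsum_congr fun v => ?_
    have hv : (Φ v w ∈ E) ↔ (Φ v w ∈ E₀) := by
      constructor
      · intro h
        by_contra h'
        exact hw (mem_iUnion.2 ⟨v, Or.inr ⟨h, h'⟩⟩)
      · intro h
        by_contra h'
        exact hw (mem_iUnion.2 ⟨v, Or.inl ⟨h, h'⟩⟩)
    by_cases hmem : w ∈ Φ v ⁻¹' E
    · rw [Set.indicator_of_mem hmem,
        Set.indicator_of_mem (Set.mem_preimage.mpr (hv.mp (Set.mem_preimage.mp hmem)))]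
    · rw [Set.indicator_of_notMem hmem,
        Set.indicator_of_notMem
          (fun hc => hmem (Set.mem_preimage.mpr (hv.mpr (Set.mem_preimage.mp hc))))]
  -- main computation
  have hΦE₀meas : ∀ v : Fin n → ℤ, MeasurableSet (Φ v ⁻¹' E₀) :=
    fun v => hE₀meas.preimage (hΦmeas v)
  set G : Set (Fin n → ℝ) := (fun x : Fin n → ℝ => (-(2:ℝ)^(-k)) • x) ⁻¹' E₀ with hGdef
  have hGmeas : MeasurableSet G := hE₀meas.preimage (measurable_const_smul _)
  have htrans : ∀ v : Fin n → ℤ,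
      volume (Φ v ⁻¹' E₀ ∩ {w : Fin n → ℝ | ∀ i, w i ∈ Icc (0:ℝ) 1})
        = volume (G ∩ {x : Fin n → ℝ | ∀ i, x i ∈ Icc (((-v) i : ℝ)) (((-v) i : ℝ) + 1)}) := by
    intro v
    rw [← measure_preimage_add volume (fun i => (v i : ℝ))
      (Φ v ⁻¹' E₀ ∩ {w : Fin n → ℝ | ∀ i, w i ∈ Icc (0:ℝ) 1})]
    congr 1
    rw [preimage_inter, hcompeq v E₀, ← hGdef]
    congr 1
    ext w
    simp only [mem_preimage, mem_setOf_eq]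
    constructor
    · intro h i
      have h1 := h i
      simp only [Pi.add_apply, mem_Icc] at h1
      simp only [Pi.neg_apply, Int.cast_neg, mem_Icc]
      constructor <;> linarith [h1.1, h1.2]
    · intro h i
      have h1 := h i
      simp only [Pi.neg_apply, Int.cast_neg, mem_Icc] at h1
      simp only [Pi.add_apply, mem_Icc]
      constructor <;> linarith [h1.1, h1.2]
  calc ∫⁻ w in {w : Fin n → ℝ | ∀ i, w i ∈ Set.Icc (0 : ℝ) 1},
        ∑' v : Fin n → ℤ,
          Set.indicator {w' : Fin n → ℝ |
              dyadicCubeR n (k - 1) (fun i => ((v i : ℝ) - w' i) / 2) ⊆ A}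
            (fun _ => (1 : ENNReal)) w ∂volume
      = ∫⁻ w in {w : Fin n → ℝ | ∀ i, w i ∈ Set.Icc (0 : ℝ) 1},
          ∑' v : Fin n → ℤ, Set.indicator (Φ v ⁻¹' E) (fun _ => (1:ENNReal)) w ∂volume := by
        refine lintegral_congr fun w => tsum_congr fun v => ?_
        rw [hset v]
    _ = ∫⁻ w in {w : Fin n → ℝ | ∀ i, w i ∈ Set.Icc (0 : ℝ) 1},
          ∑' v : Fin n → ℤ, Set.indicator (Φ v ⁻¹' E₀) (fun _ => (1:ENNReal)) w ∂volume :=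
        lintegral_congr_ae (ae_restrict_of_ae haeint)
    _ = ∑' v : Fin n → ℤ, ∫⁻ w in {w : Fin n → ℝ | ∀ i, w i ∈ Set.Icc (0 : ℝ) 1},
          Set.indicator (Φ v ⁻¹' E₀) (fun _ => (1:ENNReal)) w ∂volume :=
        lintegral_tsum fun v =>
          ((measurable_const.indicator (hΦE₀meas v)).aemeasurable)
    _ = ∑' v : Fin n → ℤ,
          volume (Φ v ⁻¹' E₀ ∩ {w : Fin n → ℝ | ∀ i, w i ∈ Icc (0:ℝ) 1}) := by
        refine tsum_congr fun v => ?_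
        rw [lintegral_indicator_const (hΦE₀meas v), one_mul,
          Measure.restrict_apply (hΦE₀meas v)]
    _ = ∑' v : Fin n → ℤ,
          volume (G ∩ {x : Fin n → ℝ | ∀ i, x i ∈ Icc (((-v) i : ℝ)) (((-v) i : ℝ) + 1)}) :=
        tsum_congr htrans
    _ = ∑' v : Fin n → ℤ,
          volume (G ∩ {x : Fin n → ℝ | ∀ i, x i ∈ Icc ((v i : ℝ)) ((v i : ℝ) + 1)}) :=
        (Equiv.neg (Fin n → ℤ)).tsum_eq
          (fun u => volume (G ∩ {x : Fin n → ℝ | ∀ i, x i ∈ Icc ((u i : ℝ)) ((u i : ℝ) + 1)}))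
    _ = volume G := aux_tiling n G hGmeas
    _ = (2 : ENNReal) ^ ((n : ℤ) * k) * volume E := by
        rw [hGdef, Measure.addHaar_preimage_smul volume hr0, measure_toMeasurable]
        congr 1
        have hfr : Module.finrank ℝ (Fin n → ℝ) = n := by
          rw [Module.finrank_pi]; exact Fintype.card_fin n
        rw [hfr]
        have habs : |(((-(2:ℝ)^(-k)) ^ n)⁻¹)| = (2:ℝ)^((n:ℤ)*k) := by
          rw [abs_inv, abs_pow, abs_neg, abs_of_pos h2k,
            ← zpow_natCast ((2:ℝ)^(-k)) n, ← zpow_mul, ← zpow_neg]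
          congr 1
          ring
        rw [habs, aux_ofReal_two_zpow]
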